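/- Let Γ = (V,A) be a finite connected bipartite digraph with parts Δ, Δ', not isomorphic to the directed cycle C_4→, let G ≤ Aut(Γ) be vertex-transitive, and suppose Γ is (G,s)-arc-transitive with s ≥ 4. Let G^+ be the index-2 subgroup of G fixing Δ and Δ' setwise, and let Γ' = (Δ, A_2) be the bipartite half on Δ. Then there exists N ⊴ G^+ such that N has at least 3 orbits on Δ, the G^+-normal quotient Γ'_N is a digraph that is (G^+/N)-vertex-transitive and (G^+/N, floor(s/2))-arc-transitive, and G^+/N is quasiprimitive or bi-quasiprimitive on the set of N-orbits on Δ. -/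

import Mathlib

/-!
Statement 0: normal quotients of (G,s)-arc-transitive digraphs (Proposition p:quot(a)).
-/

namespace ArcTransDigraph

variable {V : Type*}

/-- The arc set of a digraph is asymmetric (in particular loopless). -/
def IsDigraph (A : V → V → Prop) : Prop := ∀ u v : V, A u v → ¬ A v u

/-- Connectivity of the underlying undirected graph. -/
def Connected (A : V → V → Prop) : Prop :=
  ∀ u v : V, Relation.ReflTransGen (fun a b => A a b ∨ A b a) u v

/-- `G` consists of automorphisms of the digraph `(V, A)`. -/
def PreservesArcs (A : V → V → Prop) (G : Subgroup (Equiv.Perm V)) : Prop :=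
  ∀ g ∈ G, ∀ u v : V, A u v → A (g u) (g v)

/-- `G` is transitive on vertices. -/
def VertexTransitive (G : Subgroup (Equiv.Perm V)) : Prop :=
  ∀ u v : V, ∃ g ∈ G, g u = v

/-- `p` is an `s`-arc of the digraph with arc set `A`. -/
def IsArcSeq (A : V → V → Prop) (s : ℕ) (p : Fin (s + 1) → V) : Prop :=
  ∀ i : Fin s, A (p i.castSucc) (p i.succ)

/-- `G` is transitive on the `s`-arcs of the digraph with arc set `A`. -/
def ArcTransitive (A : V → V → Prop) (G : Subgroup (Equiv.Perm V)) (s : ℕ) : Prop :=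
  ∀ p q : Fin (s + 1) → V, IsArcSeq A s p → IsArcSeq A s q →
    ∃ g ∈ G, ∀ i : Fin (s + 1), g (p i) = q i

/-- `N` is a subgroup of `G` which is normal in `G`. -/
def NormalIn (N G : Subgroup (Equiv.Perm V)) : Prop :=
  N ≤ G ∧ ∀ g ∈ G, ∀ x ∈ N, g * x * g⁻¹ ∈ N

/-- The digraph with arc set `B` on vertex set `α` is isomorphic to the directed cycle
`C_r→`, whose vertex set is `Z_r` with arcs `(i, i+1)`. -/
def IsoDirectedCycle {α : Type*} (B : α → α → Prop) (r : ℕ) : Prop :=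
  ∃ e : α ≃ ZMod r, ∀ a b : α, B a b ↔ e b = e a + 1

/-- `Δ, Δ'` form a bipartition of the digraph with arc set `A`. -/
def IsBipartition (A : V → V → Prop) (Δ Δ' : Set V) : Prop :=
  Disjoint Δ Δ' ∧ Δ ∪ Δ' = Set.univ ∧
    ∀ u v : V, A u v → ((u ∈ Δ ∧ v ∈ Δ') ∨ (u ∈ Δ' ∧ v ∈ Δ))

/-- The arc set `A_2` of the bipartite half of `Γ = (V,A)` on the part `Δ`. -/
def halfArc (A : V → V → Prop) (Δ Δ' : Set V) : V → V → Prop :=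
  fun u w => u ∈ Δ ∧ w ∈ Δ ∧ ∃ v ∈ Δ', A u v ∧ A v w

/-- Two points of `Δ` lie in the same `N`-orbit. -/
def deltaRel (N : Subgroup (Equiv.Perm V)) (Δ : Set V) : ↥Δ → ↥Δ → Prop :=
  fun x y => ∃ n ∈ N, n (x : V) = (y : V)

/-- The arc set of the quotient `Γ'_N` of the bipartite half `Γ' = (Δ, A₂)` by the
`N`-orbit partition of `Δ`. -/
def deltaQuotArc (A : V → V → Prop) (Δ Δ' : Set V) (N : Subgroup (Equiv.Perm V)) :
    Quot (deltaRel N Δ) → Quot (deltaRel N Δ) → Prop :=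
  fun W W' => ∃ x y : ↥Δ, Quot.mk _ x = W ∧ Quot.mk _ y = W' ∧
    halfArc A Δ Δ' (x : V) (y : V)

section Basic

variable {A : V → V → Prop} {G : Subgroup (Equiv.Perm V)} {Δ Δ' : Set V}

lemma mem_part' (hbip : IsBipartition A Δ Δ') (v : V) : v ∈ Δ' ↔ v ∉ Δ := by
  obtain ⟨hdis, hcov, _⟩ := hbip
  constructor
  · intro h h'
    exact Set.disjoint_left.mp hdis h' h
  · intro h
    have : v ∈ Δ ∪ Δ' := hcov ▸ Set.mem_univ v
    rcases this with h' | h'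
    · exact absurd h' h
    · exact h'

lemma adj_flip (hbip : IsBipartition A Δ Δ') {u v : V} (h : A u v ∨ A v u) :
    (u ∈ Δ ↔ v ∉ Δ) := by
  have h3 := hbip.2.2
  rcases h with h | h
  · rcases h3 u v h with ⟨h1, h2⟩ | ⟨h1, h2⟩
    · exact ⟨fun _ => (mem_part' hbip v).mp h2, fun _ => h1⟩
    · constructor
      · intro hu; exact absurd hu ((mem_part' hbip u).mp h1)
      · intro hv; exact absurd h2 hv
  · rcases h3 v u h with ⟨h1, h2⟩ | ⟨h1, h2⟩
    · constructor
      · intro hu; exact absurd hu ((mem_part' hbip u).mp h2)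
      · intro hv; exact absurd h1 hv
    · exact ⟨fun _ => (mem_part' hbip v).mp h1, fun _ => h2⟩

lemma adj_map (hAut : PreservesArcs A G) {g : Equiv.Perm V} (hg : g ∈ G) {u v : V}
    (h : A u v ∨ A v u) : A (g u) (g v) ∨ A (g v) (g u) := by
  rcases h with h | h
  · exact Or.inl (hAut g hg u v h)
  · exact Or.inr (hAut g hg v u h)

lemma part_iff_of_walk (hbip : IsBipartition A Δ Δ') (hAut : PreservesArcs A G)
    {g : Equiv.Perm V} (hg : g ∈ G) {a b : V}
    (h : Relation.ReflTransGen (fun x y => A x y ∨ A y x) a b) :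
    ((a ∈ Δ) ↔ (b ∈ Δ)) ↔ ((g a ∈ Δ) ↔ (g b ∈ Δ)) := by
  induction h with
  | refl => tauto
  | tail h1 h2 ih =>
    have hf := adj_flip hbip h2
    have hf' := adj_flip hbip (adj_map hAut hg h2)
    tauto

/-- Every element of `G` either preserves the parts or swaps them. -/
lemma fix_or_swap (hbip : IsBipartition A Δ Δ') (hconn : Connected A)
    (hAut : PreservesArcs A G) {g : Equiv.Perm V} (hg : g ∈ G) :
    (∀ v, v ∈ Δ ↔ g v ∈ Δ) ∨ (∀ v, v ∈ Δ ↔ g v ∈ Δ') := by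
  by_cases hne : Δ.Nonempty
  · obtain ⟨x0, hx0⟩ := hne
    by_cases hgx0 : g x0 ∈ Δ
    · left
      intro v
      have := part_iff_of_walk hbip hAut hg (hconn x0 v)
      tauto
    · right
      intro v
      have := part_iff_of_walk hbip hAut hg (hconn x0 v)
      have h2 := mem_part' hbip (g v)
      tauto
  · left
    intro v
    have hv : v ∉ Δ := fun h => hne ⟨v, h⟩
    have hgv : g v ∉ Δ := fun h => hne ⟨g v, h⟩
    tauto

lemma mem_Gp_of_fix {Gp : Subgroup (Equiv.Perm V)}
    (hbip : IsBipartition A Δ Δ') (hconn : Connected A) (hAut : PreservesArcs A G)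
    (hGp : ∀ g : Equiv.Perm V, g ∈ Gp ↔
      (g ∈ G ∧ (∀ v : V, v ∈ Δ ↔ g v ∈ Δ) ∧ (∀ v : V, v ∈ Δ' ↔ g v ∈ Δ')))
    {g : Equiv.Perm V} (hg : g ∈ G) {x : V} (hx : x ∈ Δ) (hgx : g x ∈ Δ) : g ∈ Gp := by
  rcases fix_or_swap hbip hconn hAut hg with hfix | hswap
  · refine (hGp g).mpr ⟨hg, hfix, fun v => ?_⟩
    have h1 := mem_part' hbip v
    have h2 := mem_part' hbip (g v)
    have := hfix v
    tauto
  · exact absurd ((mem_part' hbip (g x)).mp ((hswap x).mp hx)) (fun h => h hgx)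

end Basic

section Part2
variable {A : V → V → Prop} {G : Subgroup (Equiv.Perm V)} {Δ Δ' : Set V}

/-- If some arc exists, every vertex has an out-neighbour. -/
lemma exists_out (hvt : VertexTransitive G) (hAut : PreservesArcs A G)
    {u0 v0 : V} (h : A u0 v0) (w : V) : ∃ z, A w z := by
  obtain ⟨g, hg, hgu⟩ := hvt u0 w
  exact ⟨g v0, hgu ▸ hAut g hg u0 v0 h⟩

lemma exists_in (hvt : VertexTransitive G) (hAut : PreservesArcs A G)
    {u0 v0 : V} (h : A u0 v0) (w : V) : ∃ z, A z w := by
  obtain ⟨g, hg, hgv⟩ := hvt v0 w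
  exact ⟨g u0, hgv ▸ hAut g hg u0 v0 h⟩

/-- From connectivity and two distinct vertices, some arc exists. -/
lemma exists_arc (hconn : Connected A) {a b : V} (hab : a ≠ b) : ∃ u v, A u v := by
  have h := hconn a b
  rcases (Relation.ReflTransGen.cases_head h) with rfl | ⟨c, hc, _⟩
  · exact absurd rfl hab
  · rcases hc with hc | hc
    · exact ⟨a, c, hc⟩
    · exact ⟨c, a, hc⟩

/-- Extend a `t`-path (Nat-indexed) to an `s`-path, agreeing on `0..t`. -/
lemma extend_nat_path (σ : V → V) (hσ : ∀ v, A v (σ v)) {t s : ℕ} (hts : t ≤ s)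
    (P : ℕ → V) (hP : ∀ i < t, A (P i) (P (i + 1))) :
    ∃ Q : ℕ → V, (∀ i < s, A (Q i) (Q (i + 1))) ∧ ∀ i ≤ t, Q i = P i := by
  refine ⟨fun k => if k ≤ t then P k else σ^[k - t] (P t), fun i hi => ?_,
    fun i hi => by simp [hi]⟩
  by_cases h1 : i + 1 ≤ t
  · simp only [if_pos (le_of_lt (lt_of_lt_of_le (Nat.lt_succ_self i) h1)), if_pos h1]
    exact hP i (lt_of_lt_of_le (Nat.lt_succ_self i) h1)
  · by_cases h2 : i ≤ t
    · have hit : i = t := le_antisymm h2 (by omega)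
      subst hit
      simp only [if_pos le_rfl, if_neg h1]
      have : i + 1 - i = 1 := by omega
      rw [this, Function.iterate_one]
      exact hσ _
    · simp only [if_neg h2, if_neg h1]
      have : i + 1 - t = (i - t) + 1 := by omega
      rw [this, Function.iterate_succ_apply']
      exact hσ _

/-- Nat-indexed version of `t`-arc transitivity for `t ≤ s`. -/
lemma nat_arc_trans (σ : V → V) (hσ : ∀ v, A v (σ v))
    {t s : ℕ} (hts : t ≤ s) (hat : ArcTransitive A G s)
    (P Q : ℕ → V) (hP : ∀ i < t, A (P i) (P (i + 1))) (hQ : ∀ i < t, A (Q i) (Q (i + 1))) :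
    ∃ g ∈ G, ∀ k ≤ t, g (P k) = Q k := by
  obtain ⟨P', hP', hPeq⟩ := extend_nat_path σ hσ hts P hP
  obtain ⟨Q', hQ', hQeq⟩ := extend_nat_path σ hσ hts Q hQ
  have harcP : IsArcSeq A s (fun j : Fin (s+1) => P' j.val) := by
    intro i
    simpa using hP' i.val i.isLt
  have harcQ : IsArcSeq A s (fun j : Fin (s+1) => Q' j.val) := by
    intro i
    simpa using hQ' i.val i.isLt
  obtain ⟨g, hg, hgeq⟩ := hat _ _ harcP harcQ
  refine ⟨g, hg, fun k hk => ?_⟩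
  have := hgeq ⟨k, by omega⟩
  simp only at this
  rw [hPeq k hk, hQeq k hk] at this
  exact this

end Part2
section Part3
variable {A : V → V → Prop} {G Gp N : Subgroup (Equiv.Perm V)} {Δ Δ' : Set V}

lemma deltaRel_equiv (N : Subgroup (Equiv.Perm V)) (Δ : Set V) :
    Equivalence (deltaRel N Δ) := by
  constructor
  · exact fun x => ⟨1, N.one_mem, rfl⟩
  · rintro x y ⟨n, hn, hnx⟩
    exact ⟨n⁻¹, N.inv_mem hn, by simp [← hnx]⟩
  · rintro x y z ⟨n, hn, hnx⟩ ⟨m, hm, hmy⟩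
    exact ⟨m * n, N.mul_mem hm hn, by simp [Equiv.Perm.mul_apply, hnx, hmy]⟩

lemma quot_mk_eq (N : Subgroup (Equiv.Perm V)) (Δ : Set V) (x y : ↥Δ) :
    Quot.mk (deltaRel N Δ) x = Quot.mk (deltaRel N Δ) y ↔ deltaRel N Δ x y := by
  rw [Quot.eq]
  exact ⟨fun h' => (Equivalence.eqvGen_iff (deltaRel_equiv N Δ)).mp h',
    fun h' => Relation.EqvGen.rel _ _ h'⟩

/-- An element of `Gp` preserves `Δ`, `Δ'` and the half-arc relation. -/
lemma half_map
    (hAut : PreservesArcs A G)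
    (hGp : ∀ g : Equiv.Perm V, g ∈ Gp ↔
      (g ∈ G ∧ (∀ v : V, v ∈ Δ ↔ g v ∈ Δ) ∧ (∀ v : V, v ∈ Δ' ↔ g v ∈ Δ')))
    {g : Equiv.Perm V} (hg : g ∈ Gp) {u w : V} (h : halfArc A Δ Δ' u w) :
    halfArc A Δ Δ' (g u) (g w) := by
  obtain ⟨hgG, hΔ, hΔ'⟩ := (hGp g).mp hg
  obtain ⟨hu, hw, v, hv, h1, h2⟩ := h
  exact ⟨(hΔ u).mp hu, (hΔ w).mp hw, g v, (hΔ' v).mp hv, hAut g hgG u v h1, hAut g hgG v w h2⟩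

/-- Lift a Nat-indexed path in the quotient to a half-arc path in `Δ`. -/
lemma lift_path
    (hAut : PreservesArcs A G)
    (hGp : ∀ g : Equiv.Perm V, g ∈ Gp ↔
      (g ∈ G ∧ (∀ v : V, v ∈ Δ ↔ g v ∈ Δ) ∧ (∀ v : V, v ∈ Δ' ↔ g v ∈ Δ')))
    (hN : NormalIn N Gp)
    (t : ℕ) (p : ℕ → Quot (deltaRel N Δ))
    (hp : ∀ i < t, deltaQuotArc A Δ Δ' N (p i) (p (i + 1))) :
    ∃ u : ℕ → ↥Δ, (∀ i ≤ t, Quot.mk (deltaRel N Δ) (u i) = p i) ∧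
      ∀ i < t, halfArc A Δ Δ' (u i : V) (u (i + 1) : V) := by
  induction t with
  | zero =>
    obtain ⟨x, hx⟩ := Quot.exists_rep (p 0)
    refine ⟨fun _ => x, fun i hi => ?_, fun i hi => absurd hi (by omega)⟩
    interval_cases i
    exact hx
  | succ t ih =>
    obtain ⟨u, hu1, hu2⟩ := ih (fun i hi => hp i (by omega))
    obtain ⟨x, y, hx, hy, hxy⟩ := hp t (by omega)
    have hrel : deltaRel N Δ x (u t) := by
      rw [← quot_mk_eq N Δ]
      rw [hx, hu1 t le_rfl]
    obtain ⟨n, hn, hnx⟩ := hrel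
    have hnGp : n ∈ Gp := hN.1 hn
    have hhalf : halfArc A Δ Δ' (n (x : V)) (n (y : V)) := half_map hAut hGp hnGp hxy
    have hnyΔ : n (y : V) ∈ Δ := hhalf.2.1
    refine ⟨fun i => if i ≤ t then u i else ⟨n (y : V), hnyΔ⟩, fun i hi => ?_, fun i hi => ?_⟩
    · by_cases h : i ≤ t
      · simp only [if_pos h]; exact hu1 i h
      · have : i = t + 1 := by omega
        subst this
        simp only [if_neg h]
        rw [← hy]
        rw [quot_mk_eq N Δ]
        exact (deltaRel_equiv N Δ).symm ⟨n, hn, rfl⟩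
    · by_cases h : i < t
      · simp only [if_pos (le_of_lt h), if_pos (by omega : i + 1 ≤ t)]
        exact hu2 i h
      · have : i = t := by omega
        subst this
        simp only [if_pos le_rfl, if_neg (by omega : ¬ i + 1 ≤ i)]
        rw [hnx] at hhalf
        exact hhalf

/-- Expand a half-arc path of length `t` into an ordinary path of length `2t`. -/
lemma expand_path (hne : Nonempty V) (t : ℕ) (u : ℕ → ↥Δ)
    (hu : ∀ i < t, halfArc A Δ Δ' (u i : V) (u (i + 1) : V)) :
    ∃ P : ℕ → V, (∀ k < 2 * t, A (P k) (P (k + 1))) ∧ ∀ i ≤ t, P (2 * i) = (u i : V) := by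
  classical
  obtain ⟨v0⟩ := hne
  have mid : ∀ i, ∃ v : V, i < t → (A (u i : V) v ∧ A v (u (i+1) : V)) := by
    intro i
    by_cases h : i < t
    · obtain ⟨_, _, v, _, h1, h2⟩ := hu i h
      exact ⟨v, fun _ => ⟨h1, h2⟩⟩
    · exact ⟨v0, fun h' => absurd h' h⟩
  choose w hw using mid
  refine ⟨fun k => if k % 2 = 0 then (u (k / 2) : V) else w (k / 2), fun k hk => ?_,
    fun i _ => by simp [Nat.mul_div_cancel_left i (by norm_num : 0 < 2), Nat.mul_mod_right]⟩
  by_cases h : k % 2 = 0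
  · obtain ⟨i, rfl⟩ : ∃ i, k = 2 * i := ⟨k / 2, by omega⟩
    have hit : i < t := by omega
    have h1 : (2 * i) % 2 = 0 := by omega
    have h2 : ¬ (2 * i + 1) % 2 = 0 := by omega
    simp only [if_pos h1, if_neg h2]
    have e1 : 2 * i / 2 = i := by omega
    have e2 : (2 * i + 1) / 2 = i := by omega
    rw [e1, e2]
    exact (hw i hit).1
  · obtain ⟨i, rfl⟩ : ∃ i, k = 2 * i + 1 := ⟨k / 2, by omega⟩
    have hit : i < t := by omega
    have h1 : ¬ (2 * i + 1) % 2 = 0 := by omega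
    have h2 : (2 * i + 1 + 1) % 2 = 0 := by omega
    simp only [if_neg h1, if_pos h2]
    have e1 : (2 * i + 1) / 2 = i := by omega
    have e2 : (2 * i + 1 + 1) / 2 = i + 1 := by omega
    rw [e1, e2]
    exact (hw i hit).2

end Part3
section Part4
variable {A : V → V → Prop} {G Gp : Subgroup (Equiv.Perm V)} {Δ Δ' : Set V}

lemma mem_part'' (hbip : IsBipartition A Δ Δ') (v : V) : v ∈ Δ' ↔ v ∉ Δ := by
  obtain ⟨hdis, hcov, _⟩ := hbip
  constructor
  · intro h h'
    exact Set.disjoint_left.mp hdis h' h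
  · intro h
    have : v ∈ Δ ∪ Δ' := hcov ▸ Set.mem_univ v
    rcases this with h' | h'
    · exact absurd h' h
    · exact h'

lemma arc_tail (hbip : IsBipartition A Δ Δ') {u v : V} (h : A u v) (hu : u ∈ Δ) : v ∈ Δ' := by
  rcases hbip.2.2 u v h with ⟨_, h2⟩ | ⟨h1, _⟩
  · exact h2
  · exact absurd hu ((mem_part'' hbip u).mp h1)

lemma arc_tail' (hbip : IsBipartition A Δ Δ') {u v : V} (h : A u v) (hu : u ∈ Δ') : v ∈ Δ := by
  rcases hbip.2.2 u v h with ⟨h1, _⟩ | ⟨_, h2⟩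
  · exact absurd h1 (fun hh => Set.disjoint_left.mp hbip.1 hh hu)
  · exact h2

lemma bip_symm (hbip : IsBipartition A Δ Δ') : IsBipartition A Δ' Δ :=
  ⟨hbip.1.symm, by rw [Set.union_comm]; exact hbip.2.1, fun u v h => (hbip.2.2 u v h).symm⟩

lemma bip_flip (hbip : IsBipartition A Δ Δ') : IsBipartition (flip A) Δ Δ' :=
  ⟨hbip.1, hbip.2.1, fun u v h => ((hbip.2.2 v u h).imp And.symm And.symm).symm⟩

lemma dig_flip (hdig : IsDigraph A) : IsDigraph (flip A) := fun u v h h' => hdig v u h h'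

/-- In a digraph whose parts both have at most two elements, no vertex of `Δ` has two
distinct out-neighbours. -/
lemma no_two_out (hdig : IsDigraph A) (hbip : IsBipartition A Δ Δ')
    (hout : ∀ v, ∃ z, A v z)
    (hΔ2 : ∃ a b, a ∈ Δ ∧ b ∈ Δ ∧ ∀ x ∈ Δ, x = a ∨ x = b)
    (hΔ'2 : ∃ c d, c ∈ Δ' ∧ d ∈ Δ' ∧ ∀ x ∈ Δ', x = c ∨ x = d)
    {u c d : V} (hu : u ∈ Δ) (hc : c ∈ Δ') (hd : d ∈ Δ') (hcd : c ≠ d)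
    (h1 : A u c) (h2 : A u d) : False := by
  obtain ⟨w, hw⟩ := hout c
  obtain ⟨w', hw'⟩ := hout d
  have hwΔ : w ∈ Δ := arc_tail' hbip hw hc
  have hw'Δ : w' ∈ Δ := arc_tail' hbip hw' hd
  have hwu : w ≠ u := fun h => hdig u c h1 (h ▸ hw)
  have hw'u : w' ≠ u := fun h => hdig u d h2 (h ▸ hw')
  obtain ⟨a, b, ha, hb, hcov⟩ := hΔ2
  have hww' : w = w' := by
    rcases hcov u hu with rfl | rfl <;> rcases hcov w hwΔ with rfl | rfl <;>
      rcases hcov w' hw'Δ with rfl | rfl <;> tauto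
  subst hww'
  obtain ⟨y, hy⟩ := hout w
  have hyΔ' : y ∈ Δ' := arc_tail hbip hy hwΔ
  obtain ⟨c', d', _, _, hcov'⟩ := hΔ'2
  have : y = c ∨ y = d := by
    rcases hcov' y hyΔ' with rfl | rfl <;> rcases hcov' c hc with rfl | rfl <;>
      rcases hcov' d hd with rfl | rfl <;> tauto
  rcases this with rfl | rfl
  · exact hdig w y hy hw
  · exact hdig w y hy hw'

end Part4

section Part5
variable {A : V → V → Prop} {G Gp : Subgroup (Equiv.Perm V)} {Δ Δ' : Set V}

lemma parts_nonempty
    (hconn : Connected A) (hAut : PreservesArcs A G)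
    (hGp : ∀ g : Equiv.Perm V, g ∈ Gp ↔
      (g ∈ G ∧ (∀ v : V, v ∈ Δ ↔ g v ∈ Δ) ∧ (∀ v : V, v ∈ Δ' ↔ g v ∈ Δ')))
    (hbip : IsBipartition A Δ Δ')
    (hidx : (Gp.subgroupOf G).index = 2) : Δ.Nonempty ∧ Δ'.Nonempty := by
  have hne : Gp.subgroupOf G ≠ ⊤ := by
    intro h
    rw [h, Subgroup.index_top] at hidx
    omega
  obtain ⟨x, hx⟩ : ∃ x : G, x ∉ Gp.subgroupOf G := by
    by_contra h
    push_neg at h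
    exact hne ((Subgroup.eq_top_iff' (Gp.subgroupOf G)).mpr h)
  set g0 : Equiv.Perm V := (x : Equiv.Perm V) with hg0
  have hg0G : g0 ∈ G := x.2
  have hg0Gp : g0 ∉ Gp := fun h => hx ((Subgroup.mem_subgroupOf).mpr h)
  rcases fix_or_swap hbip hconn hAut hg0G with hfix | hswap
  · exfalso
    apply hg0Gp
    refine (hGp g0).mpr ⟨hg0G, hfix, fun v => ?_⟩
    have h1 := mem_part' hbip v
    have h2 := mem_part' hbip (g0 v)
    have := hfix v
    tauto
  · have hVne : Nonempty V := by
      by_contra h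
      exact hg0Gp ((hGp g0).mpr ⟨hg0G, fun v => (h ⟨v⟩).elim, fun v => (h ⟨v⟩).elim⟩)
    obtain ⟨v0⟩ := hVne
    have : v0 ∈ Δ ∪ Δ' := hbip.2.1 ▸ Set.mem_univ v0
    rcases this with h | h
    · exact ⟨⟨v0, h⟩, ⟨g0 v0, (hswap v0).mp h⟩⟩
    · have hv0 : v0 ∉ Δ := (mem_part' hbip v0).mp h
      have : g0 v0 ∈ Δ := by
        by_contra h'
        have := (mem_part' hbip (g0 v0)).mpr h'
        exact hv0 ((hswap v0).mpr this)
      exact ⟨⟨g0 v0, this⟩, ⟨v0, h⟩⟩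

lemma card_delta_ge_three [Finite V]
    (hdig : IsDigraph A) (hconn : Connected A) (hAut : PreservesArcs A G)
    (hvt : VertexTransitive G)
    (hbip : IsBipartition A Δ Δ')
    (hnotC4 : ¬ IsoDirectedCycle A 4)
    (hGp : ∀ g : Equiv.Perm V, g ∈ Gp ↔
      (g ∈ G ∧ (∀ v : V, v ∈ Δ ↔ g v ∈ Δ) ∧ (∀ v : V, v ∈ Δ' ↔ g v ∈ Δ')))
    (hidx : (Gp.subgroupOf G).index = 2) : 3 ≤ Nat.card ↥Δ := by
  classical
  obtain ⟨⟨a, haΔ⟩, ⟨c, hcΔ'⟩⟩ := parts_nonempty hconn hAut hGp hbip hidx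
  have hac : a ≠ c := fun h => Set.disjoint_left.mp hbip.1 haΔ (h ▸ hcΔ')
  obtain ⟨u0, w0, harc⟩ := exists_arc hconn hac
  have hout : ∀ v, ∃ z, A v z := exists_out hvt hAut harc
  have hin : ∀ v, ∃ z, A z v := exists_in hvt hAut harc
  by_contra hlt
  push_neg at hlt
  -- |Δ'| = |Δ|
  have hcard' : Nat.card ↥Δ' = Nat.card ↥Δ := by
    obtain ⟨g1, hg1G, hg1a⟩ := hvt a c
    have hswap : ∀ v, v ∈ Δ ↔ g1 v ∈ Δ' := by
      rcases fix_or_swap hbip hconn hAut hg1G with hfix | hswap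
      · exact absurd ((hfix a).mp haΔ) (by rw [hg1a]; exact (mem_part' hbip c).mp hcΔ')
      · exact hswap
    have hswap' : ∀ v, v ∈ Δ' ↔ g1⁻¹ v ∈ Δ := by
      intro v
      have := hswap (g1⁻¹ v)
      simp only [← Equiv.Perm.mul_apply, mul_inv_cancel, Equiv.Perm.one_apply] at this
      exact this.symm
    have f1 : Function.Injective (fun x : ↥Δ => (⟨g1 x, (hswap x).mp x.2⟩ : ↥Δ')) := by
      intro x y h
      apply Subtype.ext
      exact g1.injective (congrArg Subtype.val h)
    have f2 : Function.Injective (fun x : ↥Δ' => (⟨g1⁻¹ x, (hswap' x).mp x.2⟩ : ↥Δ)) := by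
      intro x y h
      apply Subtype.ext
      exact g1⁻¹.injective (congrArg Subtype.val h)
    exact le_antisymm (Nat.card_le_card_of_injective _ f2) (Nat.card_le_card_of_injective _ f1)
  have hΔn : Δ.ncard = Nat.card ↥Δ := (Nat.card_coe_set_eq Δ).symm
  have hΔ'n : Δ'.ncard = Nat.card ↥Δ' := (Nat.card_coe_set_eq Δ').symm
  haveI : Nonempty ↥Δ := ⟨⟨a, haΔ⟩⟩
  have hpos : 0 < Nat.card ↥Δ := Nat.card_pos
  have hΔ'c : Δ'.ncard = Δ.ncard := by rw [hΔ'n, hcard', hΔn]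
  have h12 : Δ.ncard = 1 ∨ Δ.ncard = 2 := by omega
  rcases h12 with h | h
  · -- |Δ| = 1
    obtain ⟨a0, hΔeq⟩ := Set.ncard_eq_one.mp h
    obtain ⟨c0, hΔ'eq⟩ := Set.ncard_eq_one.mp (by rw [hΔ'c, h])
    obtain ⟨z, hz⟩ := hout a0
    have hzΔ' : z ∈ Δ' := arc_tail hbip hz (hΔeq ▸ rfl)
    have hz0 : z = c0 := by rw [hΔ'eq] at hzΔ'; exact hzΔ'
    obtain ⟨w, hw⟩ := hout z
    have hwΔ : w ∈ Δ := arc_tail' hbip hw hzΔ'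
    have hw0 : w = a0 := by rw [hΔeq] at hwΔ; exact hwΔ
    exact hdig a0 z hz (hw0 ▸ hw)
  · -- |Δ| = 2
    obtain ⟨a1, b1, hab1, hΔeq⟩ := Set.ncard_eq_two.mp h
    obtain ⟨c1, d1, hcd1, hΔ'eq⟩ := Set.ncard_eq_two.mp (by rw [hΔ'c, h])
    have hΔ2 : ∃ a b, a ∈ Δ ∧ b ∈ Δ ∧ ∀ x ∈ Δ, x = a ∨ x = b := by
      refine ⟨a1, b1, ?_, ?_, ?_⟩ <;> simp [hΔeq]
    have hΔ'2 : ∃ cc dd, cc ∈ Δ' ∧ dd ∈ Δ' ∧ ∀ x ∈ Δ', x = cc ∨ x = dd := by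
      refine ⟨c1, d1, ?_, ?_, ?_⟩ <;> simp [hΔ'eq]
    -- out-degree one everywhere
    have outdeg1 : ∀ u y z, A u y → A u z → y = z := by
      intro u y z hy hz
      by_contra hne
      have : u ∈ Δ ∪ Δ' := hbip.2.1 ▸ Set.mem_univ u
      rcases this with hu | hu
      · exact no_two_out hdig hbip hout hΔ2 hΔ'2 hu (arc_tail hbip hy hu)
          (arc_tail hbip hz hu) hne hy hz
      · exact no_two_out hdig (bip_symm hbip) hout hΔ'2 hΔ2 hu
          (arc_tail' hbip hy hu) (arc_tail' hbip hz hu) hne hy hz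
    have indeg1 : ∀ u y z, A y u → A z u → y = z := by
      intro u y z hy hz
      by_contra hne
      have hfout : ∀ v, ∃ z, flip A v z := hin
      have : u ∈ Δ ∪ Δ' := hbip.2.1 ▸ Set.mem_univ u
      rcases this with hu | hu
      · exact no_two_out (dig_flip hdig) (bip_flip hbip) hfout hΔ2 hΔ'2 hu
          (arc_tail (bip_flip hbip) hy hu) (arc_tail (bip_flip hbip) hz hu) hne hy hz
      · exact no_two_out (dig_flip hdig) (bip_symm (bip_flip hbip)) hfout hΔ'2 hΔ2 hu
          (arc_tail' (bip_flip hbip) hy hu) (arc_tail' (bip_flip hbip) hz hu) hne hy hz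
    -- build the 4-cycle
    have ha1Δ : a1 ∈ Δ := by simp [hΔeq]
    obtain ⟨cx, hacx⟩ := hout a1
    have hcxΔ' : cx ∈ Δ' := arc_tail hbip hacx ha1Δ
    obtain ⟨bx, hcbx⟩ := hout cx
    have hbxΔ : bx ∈ Δ := arc_tail' hbip hcbx hcxΔ'
    have hbxa : bx ≠ a1 := fun hh => hdig a1 cx hacx (hh ▸ hcbx)
    obtain ⟨dx, hbdx⟩ := hout bx
    have hdxΔ' : dx ∈ Δ' := arc_tail hbip hbdx hbxΔ
    have hdxc : dx ≠ cx := by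
      intro hh
      exact hbxa (indeg1 cx bx a1 (hh ▸ hbdx) hacx)
    obtain ⟨ex, hdex⟩ := hout dx
    have hexΔ : ex ∈ Δ := arc_tail' hbip hdex hdxΔ'
    have hexb : ex ≠ bx := fun hh => hdig bx dx hbdx (hh ▸ hdex)
    -- ex = a1
    have covΔ : ∀ x ∈ Δ, x = a1 ∨ x = bx := by
      intro x hx
      have hx' : x = a1 ∨ x = b1 := by simpa [hΔeq] using hx
      have h2 : bx = a1 ∨ bx = b1 := by simpa [hΔeq] using hbxΔ
      rcases h2 with h2 | h2
      · exact absurd h2 hbxa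
      · subst h2
        exact hx'
    have covΔ' : ∀ x ∈ Δ', x = cx ∨ x = dx := by
      intro x hx
      have hx' : x = c1 ∨ x = d1 := by simpa [hΔ'eq] using hx
      have h1 : cx = c1 ∨ cx = d1 := by simpa [hΔ'eq] using hcxΔ'
      have h2 : dx = c1 ∨ dx = d1 := by simpa [hΔ'eq] using hdxΔ'
      rcases h1 with h1 | h1 <;> rcases h2 with h2 | h2
      · exact absurd (h2.trans h1.symm) hdxc
      · subst h1; subst h2; exact hx'
      · subst h1; subst h2; exact hx'.symm
      · exact absurd (h2.trans h1.symm) hdxc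
    have hexa : ex = a1 := by
      rcases covΔ ex hexΔ with h' | h'
      · exact h'
      · exact absurd h' hexb
    rw [hexa] at hdex
    -- distinctness
    have d_ac : a1 ≠ cx := fun hh => (mem_part'' hbip cx).mp hcxΔ' (hh ▸ ha1Δ)
    have d_ad : a1 ≠ dx := fun hh => (mem_part'' hbip dx).mp hdxΔ' (hh ▸ ha1Δ)
    have d_bc : bx ≠ cx := fun hh => (mem_part'' hbip cx).mp hcxΔ' (hh ▸ hbxΔ)
    have d_bd : bx ≠ dx := fun hh => (mem_part'' hbip dx).mp hdxΔ' (hh ▸ hbxΔ)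
    have cover4 : ∀ v : V, v = a1 ∨ v = cx ∨ v = bx ∨ v = dx := by
      intro v
      have : v ∈ Δ ∪ Δ' := hbip.2.1 ▸ Set.mem_univ v
      rcases this with hv | hv
      · rcases covΔ v hv with rfl | rfl <;> tauto
      · rcases covΔ' v hv with rfl | rfl <;> tauto
    have arcChar : ∀ x y, A x y ↔
        ((x = a1 ∧ y = cx) ∨ (x = cx ∧ y = bx) ∨ (x = bx ∧ y = dx) ∨ (x = dx ∧ y = a1)) := by
      intro x y
      constructor
      · intro hxy
        rcases cover4 x with rfl | rfl | rfl | rfl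
        · exact Or.inl ⟨rfl, outdeg1 x y cx hxy hacx⟩
        · exact Or.inr (Or.inl ⟨rfl, outdeg1 x y bx hxy hcbx⟩)
        · exact Or.inr (Or.inr (Or.inl ⟨rfl, outdeg1 x y dx hxy hbdx⟩))
        · exact Or.inr (Or.inr (Or.inr ⟨rfl, outdeg1 x y a1 hxy hdex⟩))
      · rintro (⟨rfl, rfl⟩ | ⟨rfl, rfl⟩ | ⟨rfl, rfl⟩ | ⟨rfl, rfl⟩)
        · exact hacx
        · exact hcbx
        · exact hbdx
        · exact hdex
    -- construct the isomorphism with the directed 4-cycle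
    apply hnotC4
    have z10 : (1 : ZMod 4) ≠ 0 := by decide
    have z20 : (2 : ZMod 4) ≠ 0 := by decide
    have z21 : (2 : ZMod 4) ≠ 1 := by decide
    have z30 : (3 : ZMod 4) ≠ 0 := by decide
    have z31 : (3 : ZMod 4) ≠ 1 := by decide
    have z32 : (3 : ZMod 4) ≠ 2 := by decide
    have n1 : a1 ≠ cx := d_ac
    have n2 : cx ≠ a1 := Ne.symm d_ac
    have n3 : a1 ≠ bx := Ne.symm hbxa
    have n4 : bx ≠ a1 := hbxa
    have n5 : a1 ≠ dx := d_ad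
    have n6 : dx ≠ a1 := Ne.symm d_ad
    have n7 : cx ≠ bx := Ne.symm d_bc
    have n8 : bx ≠ cx := d_bc
    have n9 : cx ≠ dx := Ne.symm hdxc
    have n10 : dx ≠ cx := hdxc
    have n11 : bx ≠ dx := d_bd
    have n12 : dx ≠ bx := Ne.symm d_bd
    set f : V → ZMod 4 :=
      fun v => if v = a1 then 0 else if v = cx then 1 else if v = bx then 2 else 3 with hf
    have fa : f a1 = 0 := by simp [hf]
    have fc : f cx = 1 := by simp [hf, n2]
    have fb : f bx = 2 := by simp [hf, n4, n8]
    have fd : f dx = 3 := by simp [hf, n6, n10, n12]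
    set finv : ZMod 4 → V :=
      fun i => if i = 0 then a1 else if i = 1 then cx else if i = 2 then bx else dx with hfi
    have ia : finv 0 = a1 := by simp [hfi]
    have ic : finv 1 = cx := by simp [hfi, z10]
    have ib : finv 2 = bx := by simp [hfi, z20, z21]
    have idd : finv 3 = dx := by simp [hfi, z30, z31, z32]
    refine ⟨⟨f, finv, ?_, ?_⟩, ?_⟩
    · intro v
      rcases cover4 v with rfl | rfl | rfl | rfl
      · rw [fa, ia]
      · rw [fc, ic]
      · rw [fb, ib]
      · rw [fd, idd]
    · intro i
      have h4 : i = 0 ∨ i = 1 ∨ i = 2 ∨ i = 3 := by revert i; decide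
      rcases h4 with rfl | rfl | rfl | rfl
      · rw [ia, fa]
      · rw [ic, fc]
      · rw [ib, fb]
      · rw [idd, fd]
    · intro x y
      rw [arcChar x y]
      rcases cover4 x with rfl | rfl | rfl | rfl <;>
        rcases cover4 y with rfl | rfl | rfl | rfl <;>
        simp only [Equiv.coe_fn_mk, n1, n2, n3, n4, n5, n6, n7, n8, n9, n10, n11, n12,
          fa, fc, fb, fd,
          eq_self_iff_true, true_and, and_true, false_and, and_false, or_false, false_or,
          true_or, or_true, iff_true, iff_false, not_false_iff] <;>
        decide

end Part5


section Part6
variable {A : V → V → Prop} {G Gp N : Subgroup (Equiv.Perm V)} {Δ Δ' : Set V}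

lemma conj_orbit (hN : NormalIn N Gp) {g : Equiv.Perm V} (hg : g ∈ Gp)
    {n : Equiv.Perm V} (hn : n ∈ N) (v : V) :
    ∃ m ∈ N, m (g v) = g (n v) := by
  refine ⟨g * n * g⁻¹, hN.2 g hg n hn, ?_⟩
  simp [Equiv.Perm.mul_apply]

/-- Vertex-transitivity of the quotient. -/
lemma quot_vertex_trans
    (hconn : Connected A) (hAut : PreservesArcs A G) (hvt : VertexTransitive G)
    (hbip : IsBipartition A Δ Δ')
    (hGp : ∀ g : Equiv.Perm V, g ∈ Gp ↔
      (g ∈ G ∧ (∀ v : V, v ∈ Δ ↔ g v ∈ Δ) ∧ (∀ v : V, v ∈ Δ' ↔ g v ∈ Δ')))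
    (hN : NormalIn N Gp)
    (W W' : Quot (deltaRel N Δ)) :
    ∃ g ∈ Gp, ∀ x y : ↥Δ, g (x : V) = (y : V) →
      Quot.mk (deltaRel N Δ) x = W → Quot.mk (deltaRel N Δ) y = W' := by
  obtain ⟨x0, hx0⟩ := Quot.exists_rep W
  obtain ⟨y0, hy0⟩ := Quot.exists_rep W'
  obtain ⟨g, hgG, hgx⟩ := hvt (x0 : V) (y0 : V)
  have hgGp : g ∈ Gp := mem_Gp_of_fix hbip hconn hAut hGp hgG x0.2 (hgx ▸ y0.2)
  refine ⟨g, hgGp, fun x y hxy hxW => ?_⟩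
  have hrel : deltaRel N Δ x0 x :=
    (quot_mk_eq N Δ x0 x).mp (hx0.trans hxW.symm)
  obtain ⟨n, hn, hnx⟩ := hrel
  obtain ⟨m, hm, hmeq⟩ := conj_orbit hN hgGp hn (x0 : V)
  have : m (y0 : V) = (y : V) := by
    rw [hgx] at hmeq
    rw [hmeq, hnx, hxy]
  rw [← hy0]
  exact ((quot_mk_eq N Δ y0 y).mpr ⟨m, hm, this⟩).symm

/-- Cardinality of the quotient by the trivial subgroup. -/
lemma quot_bot_card : Nat.card (Quot (deltaRel (⊥ : Subgroup (Equiv.Perm V)) Δ)) =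
    Nat.card ↥Δ := by
  refine Nat.card_congr ⟨Quot.lift id ?_, Quot.mk _, ?_, fun x => rfl⟩
  · rintro a b ⟨n, hn, hna⟩
    rw [Subgroup.mem_bot] at hn
    subst hn
    exact Subtype.ext hna
  · intro q
    induction q using Quot.ind
    rfl

/-- From at most two orbits, a covering pair of points. -/
lemma cover_of_card_lt [Finite V] (L : Subgroup (Equiv.Perm V))
    (hΔne : Δ.Nonempty)
    (hlt : ¬ 3 ≤ Nat.card (Quot (deltaRel L Δ))) :
    ∃ a ∈ Δ, ∃ b ∈ Δ, ∀ x ∈ Δ, (∃ l ∈ L, l a = x) ∨ (∃ l ∈ L, l b = x) := by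
  by_contra hcon
  push_neg at hcon
  obtain ⟨a0, ha0⟩ := hΔne
  obtain ⟨x1, hx1Δ, hx11, hx12⟩ := hcon a0 ha0 a0 ha0
  obtain ⟨x2, hx2Δ, hx21, hx22⟩ := hcon a0 ha0 x1 hx1Δ
  apply hlt
  set q0 := Quot.mk (deltaRel L Δ) ⟨a0, ha0⟩ with hq0
  set q1 := Quot.mk (deltaRel L Δ) ⟨x1, hx1Δ⟩ with hq1
  set q2 := Quot.mk (deltaRel L Δ) ⟨x2, hx2Δ⟩ with hq2
  have d01 : q0 ≠ q1 := by
    intro h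
    obtain ⟨l, hl, hla⟩ := (quot_mk_eq L Δ _ _).mp h
    exact hx11 l hl hla
  have d02 : q0 ≠ q2 := by
    intro h
    obtain ⟨l, hl, hla⟩ := (quot_mk_eq L Δ _ _).mp h
    exact hx21 l hl hla
  have d12 : q1 ≠ q2 := by
    intro h
    obtain ⟨l, hl, hla⟩ := (quot_mk_eq L Δ _ _).mp h
    exact hx22 l hl hla
  have hinj : Function.Injective (![q0, q1, q2]) := by
    intro i j hij
    fin_cases i <;> fin_cases j <;> simp_all
  calc (3 : ℕ) = Nat.card (Fin 3) := by simp
    _ ≤ _ := Nat.card_le_card_of_injective _ hinj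

end Part6


section Part7
variable {A : V → V → Prop} {G Gp N : Subgroup (Equiv.Perm V)} {Δ Δ' : Set V}

/-- Arc-transitivity of the quotient on `⌊s/2⌋`-arcs. -/
lemma quot_arc_trans
    (hconn : Connected A) (hAut : PreservesArcs A G) (hvt : VertexTransitive G)
    (hbip : IsBipartition A Δ Δ')
    (hGp : ∀ g : Equiv.Perm V, g ∈ Gp ↔
      (g ∈ G ∧ (∀ v : V, v ∈ Δ ↔ g v ∈ Δ) ∧ (∀ v : V, v ∈ Δ' ↔ g v ∈ Δ')))
    (hN : NormalIn N Gp)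
    {s : ℕ} (hat : ArcTransitive A G s)
    (σ : V → V) (hσ : ∀ v, A v (σ v))
    (p q : Fin (s / 2 + 1) → Quot (deltaRel N Δ))
    (hp : IsArcSeq (deltaQuotArc A Δ Δ' N) (s / 2) p)
    (hq : IsArcSeq (deltaQuotArc A Δ Δ' N) (s / 2) q) :
    ∃ g ∈ Gp, ∀ (i : Fin (s / 2 + 1)) (x y : ↥Δ),
      g (x : V) = (y : V) → Quot.mk (deltaRel N Δ) x = p i →
        Quot.mk (deltaRel N Δ) y = q i := by
  have natify : ∀ r : Fin (s / 2 + 1) → Quot (deltaRel N Δ),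
      IsArcSeq (deltaQuotArc A Δ Δ' N) (s / 2) r →
      ∃ rN : ℕ → Quot (deltaRel N Δ), (∀ i : Fin (s / 2 + 1), rN i.val = r i) ∧
        (∀ i < s / 2, deltaQuotArc A Δ Δ' N (rN i) (rN (i+1))) := by
    intro r hr
    refine ⟨fun k => r ⟨min k (s / 2), by omega⟩, fun i => ?_, fun i hi => ?_⟩
    · show r ⟨min (i.val) (s / 2), by omega⟩ = r i
      exact congrArg r (Fin.ext (by simp only [Fin.val_mk]; have := i.isLt; omega))
    · have e1 : r ⟨min i (s / 2), by omega⟩ = r ((⟨i, hi⟩ : Fin (s / 2)).castSucc) :=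
        congrArg r (Fin.ext (by simp only [Fin.val_mk, Fin.coe_castSucc]; omega))
      have e2 : r ⟨min (i+1) (s / 2), by omega⟩ = r ((⟨i, hi⟩ : Fin (s / 2)).succ) :=
        congrArg r (Fin.ext (by simp only [Fin.val_mk, Fin.val_succ]; omega))
      show deltaQuotArc A Δ Δ' N (r ⟨min i (s / 2), by omega⟩) (r ⟨min (i+1) (s / 2), by omega⟩)
      rw [e1, e2]
      exact hr ⟨i, hi⟩
  obtain ⟨pN, hpN1, hpN2⟩ := natify p hp
  obtain ⟨qN, hqN1, hqN2⟩ := natify q hq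
  obtain ⟨u, hu1, hu2⟩ := lift_path hAut hGp hN (s / 2) pN hpN2
  obtain ⟨u', hu'1, hu'2⟩ := lift_path hAut hGp hN (s / 2) qN hqN2
  have hVne : Nonempty V := ⟨(u 0 : V)⟩
  obtain ⟨P, hP1, hP2⟩ := expand_path hVne (s / 2) u hu2
  obtain ⟨Q, hQ1, hQ2⟩ := expand_path hVne (s / 2) u' hu'2
  have h2t : 2 * (s / 2) ≤ s := by omega
  obtain ⟨g, hgG, hmatch⟩ := nat_arc_trans σ hσ h2t hat P Q hP1 hQ1
  have hgu : ∀ i ≤ s / 2, g (u i : V) = (u' i : V) := by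
    intro i hi
    have := hmatch (2 * i) (by omega)
    rwa [hP2 i hi, hQ2 i hi] at this
  have hgGp : g ∈ Gp :=
    mem_Gp_of_fix hbip hconn hAut hGp hgG (u 0).2 ((hgu 0 (by omega)) ▸ (u' 0).2)
  refine ⟨g, hgGp, fun i x y hxy hxp => ?_⟩
  have hiv : i.val ≤ s / 2 := by omega
  have hrel : deltaRel N Δ (u i.val) x :=
    (quot_mk_eq N Δ _ _).mp ((hu1 i.val hiv).trans ((hpN1 i).trans hxp.symm))
  obtain ⟨n, hn, hnu⟩ := hrel
  obtain ⟨m, hm, hmeq⟩ := conj_orbit hN hgGp hn (u i.val : V)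
  have : m (u' i.val : V) = (y : V) := by
    rw [hgu i.val hiv] at hmeq
    rw [hmeq, hnu, hxy]
  rw [← hqN1 i, ← hu'1 i.val hiv]
  exact ((quot_mk_eq N Δ _ _).mpr ⟨m, hm, this⟩).symm

end Part7


section Part8
variable {A : V → V → Prop} {G Gp N : Subgroup (Equiv.Perm V)} {Δ Δ' : Set V}

lemma arc_head (hbip : IsBipartition A Δ Δ') {u v : V} (h : A u v) (hv : v ∈ Δ') : u ∈ Δ := by
  rcases hbip.2.2 u v h with ⟨h1, _⟩ | ⟨_, h2⟩
  · exact h1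
  · exact (((mem_part' hbip v).mp hv) h2).elim

lemma arc_head' (hbip : IsBipartition A Δ Δ') {u v : V} (h : A u v) (hv : v ∈ Δ) : u ∈ Δ' := by
  rcases hbip.2.2 u v h with ⟨_, h2⟩ | ⟨h1, _⟩
  · exact absurd h2 (fun hh => Set.disjoint_left.mp hbip.1 hv hh)
  · exact h1

/-- The normal quotient of the bipartite half is a digraph, provided `N` has at
least three orbits on `Δ`. -/
lemma quot_isDigraph [Finite V]
    (hdig : IsDigraph A) (hconn : Connected A) (hAut : PreservesArcs A G)
    (hvt : VertexTransitive G)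
    (hbip : IsBipartition A Δ Δ')
    (hGp : ∀ g : Equiv.Perm V, g ∈ Gp ↔
      (g ∈ G ∧ (∀ v : V, v ∈ Δ ↔ g v ∈ Δ) ∧ (∀ v : V, v ∈ Δ' ↔ g v ∈ Δ')))
    (hN : NormalIn N Gp)
    {s : ℕ} (hs : 4 ≤ s) (hat : ArcTransitive A G s)
    (σ : V → V) (hσ : ∀ v, A v (σ v))
    (hcard : 3 ≤ Nat.card (Quot (deltaRel N Δ))) :
    IsDigraph (deltaQuotArc A Δ Δ' N) := by
  intro W W' h1 h2
  have hcover : ∀ v : V, v ∈ Δ ∪ Δ' := fun v => hbip.2.1 ▸ Set.mem_univ v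
  -- the base symmetric pair gives a 4-arc returning to the same N-orbit
  obtain ⟨x1, y1, hx1, hy1, h12⟩ := id h1
  obtain ⟨x2, y2, hx2, hy2, h22⟩ := id h2
  have hin : ∀ v, ∃ z, A z v := exists_in hvt hAut (hσ (x1 : V))
  obtain ⟨n, hn, hnx2⟩ := (quot_mk_eq N Δ x2 y1).mp (hx2.trans hy1.symm)
  have hnGp : n ∈ Gp := hN.1 hn
  have hhalf2 : halfArc A Δ Δ' (n (x2 : V)) (n (y2 : V)) := half_map hAut hGp hnGp h22
  rw [hnx2] at hhalf2
  set z : ↥Δ := ⟨n (y2 : V), hhalf2.2.1⟩ with hzdef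
  have hzx1 : deltaRel N Δ x1 z := by
    have hzy2 : deltaRel N Δ y2 z := ⟨n, hn, rfl⟩
    have h' : Quot.mk (deltaRel N Δ) x1 = Quot.mk (deltaRel N Δ) y2 := hx1.trans hy2.symm
    exact (deltaRel_equiv N Δ).trans ((quot_mk_eq N Δ x1 y2).mp h') hzy2
  -- the key property: 4-arcs starting in Δ return to the same N-orbit
  have key : ∀ aa bb cc : ↥Δ, halfArc A Δ Δ' (aa : V) (bb : V) →
      halfArc A Δ Δ' (bb : V) (cc : V) → deltaRel N Δ aa cc := by
    intro aa bb cc hab hbc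
    obtain ⟨_, _, v1, hv1, ha1, ha2⟩ := hab
    obtain ⟨_, _, v2, hv2, hb1, hb2⟩ := hbc
    obtain ⟨_, _, w1, hw1, hc1, hc2⟩ := h12
    obtain ⟨_, _, w2, hw2, hd1, hd2⟩ := hhalf2
    set P : ℕ → V := fun k =>
      if k = 0 then (x1 : V) else if k = 1 then w1 else if k = 2 then (y1 : V)
        else if k = 3 then w2 else (z : V) with hPdef
    set Q : ℕ → V := fun k =>
      if k = 0 then (aa : V) else if k = 1 then v1 else if k = 2 then (bb : V)
        else if k = 3 then v2 else (cc : V) with hQdef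
    have hP : ∀ i < 4, A (P i) (P (i+1)) := by
      intro i hi
      interval_cases i <;> simp [hPdef] <;> assumption
    have hQ : ∀ i < 4, A (Q i) (Q (i+1)) := by
      intro i hi
      interval_cases i <;> simp [hQdef] <;> assumption
    obtain ⟨g, hgG, hmatch⟩ := nat_arc_trans σ hσ hs hat P Q hP hQ
    have hg0 : g (x1 : V) = (aa : V) := by
      have := hmatch 0 (by omega)
      simpa [hPdef, hQdef] using this
    have hg4 : g (z : V) = (cc : V) := by
      have := hmatch 4 (by omega)
      simpa [hPdef, hQdef] using this
    have hgGp : g ∈ Gp := mem_Gp_of_fix hbip hconn hAut hGp hgG x1.2 (hg0 ▸ aa.2)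
    obtain ⟨n0, hn0, hn0x⟩ := hzx1
    obtain ⟨m, hm, hmeq⟩ := conj_orbit hN hgGp hn0 (x1 : V)
    refine ⟨m, hm, ?_⟩
    rw [hg0] at hmeq
    rw [hmeq, hn0x, hg4]
  -- quotient-level consequences
  have qkey : ∀ W1 W2 W3, deltaQuotArc A Δ Δ' N W1 W2 → deltaQuotArc A Δ Δ' N W2 W3 →
      W3 = W1 := by
    rintro W1 W2 W3 ⟨xa, ya, hxa, hya, hha⟩ ⟨xb, yb, hxb, hyb, hhb⟩
    obtain ⟨nn, hnn, hnnx⟩ := (quot_mk_eq N Δ xb ya).mp (hxb.trans hya.symm)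
    have : halfArc A Δ Δ' (nn (xb : V)) (nn (yb : V)) := half_map hAut hGp (hN.1 hnn) hhb
    rw [hnnx] at this
    set zz : ↥Δ := ⟨nn (yb : V), this.2.1⟩
    have h3 : deltaRel N Δ xa zz := key xa ya zz hha this
    have e1 : Quot.mk (deltaRel N Δ) zz = W3 := by
      rw [← hyb]
      exact ((quot_mk_eq N Δ yb zz).mpr ⟨nn, hnn, rfl⟩).symm
    rw [← e1, ← hxa]
    exact ((quot_mk_eq N Δ xa zz).mpr h3).symm
  have qout : ∀ X, ∃ Y, deltaQuotArc A Δ Δ' N X Y := by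
    intro X
    obtain ⟨x, hx⟩ := Quot.exists_rep X
    have h1' : σ (x : V) ∈ Δ' := arc_tail hbip (hσ (x : V)) x.2
    have h2' : σ (σ (x : V)) ∈ Δ := arc_tail' hbip (hσ (σ (x : V))) h1'
    exact ⟨Quot.mk _ ⟨σ (σ (x : V)), h2'⟩, x, ⟨σ (σ (x : V)), h2'⟩, hx, rfl,
      x.2, h2', σ (x : V), h1', hσ _, hσ _⟩
  have uniqOut : ∀ X Y Y', deltaQuotArc A Δ Δ' N X Y → deltaQuotArc A Δ Δ' N X Y' → Y = Y' := by
    intro X Y Y' hXY hXY'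
    obtain ⟨D, hD⟩ := qout Y
    have hYX : deltaQuotArc A Δ Δ' N Y X := (qkey X Y D hXY hD) ▸ hD
    exact (qkey Y X Y' hYX hXY').symm
  have stepF : ∀ X Y, deltaQuotArc A Δ Δ' N X Y → (X = W ∨ X = W') → (Y = W ∨ Y = W') := by
    rintro X Y hXY (rfl | rfl)
    · exact Or.inr (uniqOut X W' Y h1 hXY).symm
    · exact Or.inl (uniqOut X W Y h2 hXY).symm
  have stepB : ∀ X Y, deltaQuotArc A Δ Δ' N X Y → (Y = W ∨ Y = W') → (X = W ∨ X = W') := by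
    rintro X Y hXY (rfl | rfl)
    · exact Or.inr (qkey X Y W' hXY h1).symm
    · exact Or.inl (qkey X Y W hXY h2).symm
  -- the invariant along walks in Γ
  set good : V → Prop := fun v =>
    (∀ hv : v ∈ Δ, (Quot.mk (deltaRel N Δ) ⟨v, hv⟩ = W ∨ Quot.mk (deltaRel N Δ) ⟨v, hv⟩ = W')) ∧
    (v ∈ Δ' → ∃ r, ∃ hr : r ∈ Δ, A r v ∧
      (Quot.mk (deltaRel N Δ) ⟨r, hr⟩ = W ∨ Quot.mk (deltaRel N Δ) ⟨r, hr⟩ = W')) with hgood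
  have good_step : ∀ v v', good v → (A v v' ∨ A v' v) → good v' := by
    intro v v' hg hadj
    rcases hcover v with hv | hv
    · -- v ∈ Δ, so v' ∈ Δ'
      have hv' : v' ∈ Δ' := by
        rcases hadj with h | h
        · exact arc_tail hbip h hv
        · exact arc_head' hbip h hv
      constructor
      · intro hh
        exact absurd hh ((mem_part' hbip v').mp hv')
      · intro _
        rcases hadj with h | h
        · exact ⟨v, hv, h, hg.1 hv⟩
        · obtain ⟨r0, hr0⟩ := hin v'
          have hr0Δ : r0 ∈ Δ := arc_head hbip hr0 hv'
          have hqa : deltaQuotArc A Δ Δ' N (Quot.mk _ ⟨r0, hr0Δ⟩) (Quot.mk _ ⟨v, hv⟩) :=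
            ⟨⟨r0, hr0Δ⟩, ⟨v, hv⟩, rfl, rfl, hr0Δ, hv, v', hv', hr0, h⟩
          exact ⟨r0, hr0Δ, hr0, stepB _ _ hqa (hg.1 hv)⟩
    · -- v ∈ Δ', so v' ∈ Δ
      obtain ⟨r, hr, hrv, hrW⟩ := hg.2 hv
      have hv'Δ : v' ∈ Δ := by
        rcases hadj with h | h
        · exact arc_tail' hbip h hv
        · exact arc_head hbip h hv
      constructor
      · intro hh
        rcases hadj with h | h
        · have hqa : deltaQuotArc A Δ Δ' N (Quot.mk _ ⟨r, hr⟩) (Quot.mk _ ⟨v', hh⟩) :=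
            ⟨⟨r, hr⟩, ⟨v', hh⟩, rfl, rfl, hr, hh, v, hv, hrv, h⟩
          exact stepF _ _ hqa hrW
        · have hz0 : σ v ∈ Δ := arc_tail' hbip (hσ v) hv
          have hqa1 : deltaQuotArc A Δ Δ' N (Quot.mk _ ⟨r, hr⟩) (Quot.mk _ ⟨σ v, hz0⟩) :=
            ⟨⟨r, hr⟩, ⟨σ v, hz0⟩, rfl, rfl, hr, hz0, v, hv, hrv, hσ v⟩
          have hqa2 : deltaQuotArc A Δ Δ' N (Quot.mk _ ⟨v', hh⟩) (Quot.mk _ ⟨σ v, hz0⟩) :=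
            ⟨⟨v', hh⟩, ⟨σ v, hz0⟩, rfl, rfl, hh, hz0, v, hv, h, hσ v⟩
          exact stepB _ _ hqa2 (stepF _ _ hqa1 hrW)
      · intro hh
        exact (((mem_part' hbip v').mp hh) hv'Δ).elim
  have good_x1 : good (x1 : V) := by
    constructor
    · intro hv
      have : (⟨(x1 : V), hv⟩ : ↥Δ) = x1 := Subtype.ext rfl
      rw [this, hx1]
      exact Or.inl rfl
    · intro hh
      exact absurd x1.2 ((mem_part' hbip (x1 : V)).mp hh)
  have all_walk : ∀ w, Relation.ReflTransGen (fun a b => A a b ∨ A b a) (x1 : V) w → good w := by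
    intro w hw
    induction hw with
    | refl => exact good_x1
    | tail h1' h2' ih => exact good_step _ _ ih h2'
  have all_good : ∀ zz : ↥Δ, Quot.mk (deltaRel N Δ) zz = W ∨ Quot.mk (deltaRel N Δ) zz = W' := by
    intro zz
    have h' := (all_walk (zz : V) (hconn _ _)).1 zz.2
    have he : (⟨(zz : V), zz.2⟩ : ↥Δ) = zz := Subtype.ext rfl
    rwa [he] at h'
  -- at most two orbits: contradiction
  have hsurj : Function.Surjective (fun b : Bool => if b then W else W') := by
    intro X
    obtain ⟨zz, hzz⟩ := Quot.exists_rep X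
    rcases all_good zz with h | h
    · exact ⟨true, by simp [← hzz, ← h]⟩
    · exact ⟨false, by simp [← hzz, ← h]⟩
  have hle : Nat.card (Quot (deltaRel N Δ)) ≤ Nat.card Bool :=
    Nat.card_le_card_of_surjective _ hsurj
  simp [Nat.card_eq_fintype_card] at hle
  omega

end Part8


theorem bipartite_half_quasiprimitive_quotient
    [Finite V] (A : V → V → Prop) (G Gp : Subgroup (Equiv.Perm V)) (s : ℕ)
    (Δ Δ' : Set V)
    (hdig : IsDigraph A) (hconn : Connected A) (hAut : PreservesArcs A G)
    (hvt : VertexTransitive G) (hs : 4 ≤ s) (hat : ArcTransitive A G s)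
    (hbip : IsBipartition A Δ Δ')
    (hnotC4 : ¬ IsoDirectedCycle A 4)
    (hGp : ∀ g : Equiv.Perm V, g ∈ Gp ↔
      (g ∈ G ∧ (∀ v : V, v ∈ Δ ↔ g v ∈ Δ) ∧ (∀ v : V, v ∈ Δ' ↔ g v ∈ Δ')))
    (hidx : (Gp.subgroupOf G).index = 2) :
    ∃ N : Subgroup (Equiv.Perm V), NormalIn N Gp ∧
      -- N has at least 3 orbits on Δ
      3 ≤ Nat.card (Quot (deltaRel N Δ)) ∧
      -- the quotient Γ'_N is a digraph
      IsDigraph (deltaQuotArc A Δ Δ' N) ∧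
      -- the induced action of G⁺/N on Γ'_N is vertex-transitive
      (∀ W W' : Quot (deltaRel N Δ), ∃ g ∈ Gp, ∀ x y : ↥Δ,
        g (x : V) = (y : V) → Quot.mk _ x = W → Quot.mk _ y = W') ∧
      -- the induced action of G⁺/N on Γ'_N is transitive on ⌊s/2⌋-arcs
      (∀ p q : Fin (s / 2 + 1) → Quot (deltaRel N Δ),
        IsArcSeq (deltaQuotArc A Δ Δ' N) (s / 2) p →
        IsArcSeq (deltaQuotArc A Δ Δ' N) (s / 2) q →
        ∃ g ∈ Gp, ∀ (i : Fin (s / 2 + 1)) (x y : ↥Δ),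
          g (x : V) = (y : V) → Quot.mk _ x = p i → Quot.mk _ y = q i) ∧
      -- G⁺/N is quasiprimitive or bi-quasiprimitive on the set of N-orbits on Δ;
      -- its nontrivial normal subgroups are the L/N with N < L ⊴ G⁺, and for N ≤ L
      -- the L-orbits on the set of N-orbits correspond to the L-orbits on Δ
      ((∀ L : Subgroup (Equiv.Perm V), NormalIn L Gp → N ≤ L → N ≠ L →
          ∀ x ∈ Δ, ∀ y ∈ Δ, ∃ l ∈ L, l x = y) ∨
        ((∀ L : Subgroup (Equiv.Perm V), NormalIn L Gp → N ≤ L → N ≠ L →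
            ∃ a ∈ Δ, ∃ b ∈ Δ, ∀ x ∈ Δ, (∃ l ∈ L, l a = x) ∨ (∃ l ∈ L, l b = x)) ∧
          (∃ L : Subgroup (Equiv.Perm V), NormalIn L Gp ∧ N ≤ L ∧
            ∃ a ∈ Δ, ∃ b ∈ Δ,
              (∀ x ∈ Δ, (∃ l ∈ L, l a = x) ∨ (∃ l ∈ L, l b = x)) ∧
              ¬ ∃ l ∈ L, l a = b))) := by
  classical
  have h3Δ : 3 ≤ Nat.card ↥Δ :=
    card_delta_ge_three hdig hconn hAut hvt hbip hnotC4 hGp hidx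
  obtain ⟨⟨a0, ha0⟩, ⟨c0, hc0⟩⟩ := parts_nonempty hconn hAut hGp hbip hidx
  have hΔne : Δ.Nonempty := ⟨a0, ha0⟩
  have hac : a0 ≠ c0 := fun h => Set.disjoint_left.mp hbip.1 ha0 (h ▸ hc0)
  obtain ⟨u0, w0, harc⟩ := exists_arc hconn hac
  have hout : ∀ v, ∃ z, A v z := exists_out hvt hAut harc
  choose σ hσ using hout
  -- choose a maximal normal subgroup of `Gp` with at least three orbits on `Δ`
  set S : Set (Subgroup (Equiv.Perm V)) :=
    {L | NormalIn L Gp ∧ 3 ≤ Nat.card (Quot (deltaRel L Δ))} with hSdef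
  have hbotS : (⊥ : Subgroup (Equiv.Perm V)) ∈ S := by
    constructor
    · exact ⟨bot_le, fun g hg x hx => by
        rw [Subgroup.mem_bot] at hx
        simp [hx]⟩
    · rw [quot_bot_card]
      exact h3Δ
  obtain ⟨N, hNS, hNmax⟩ :=
    Set.Finite.exists_maximalFor (fun L : Subgroup (Equiv.Perm V) => Nat.card ↥L) S
      (Set.toFinite S) ⟨⊥, hbotS⟩
  obtain ⟨hNnorm, hNcard⟩ := hNS
  have hmaxcons : ∀ L : Subgroup (Equiv.Perm V), NormalIn L Gp → N ≤ L → N ≠ L →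
      ¬ 3 ≤ Nat.card (Quot (deltaRel L Δ)) := by
    intro L hL hNL hne h3L
    have hLS : L ∈ S := ⟨hL, h3L⟩
    have hcard_le : Nat.card ↥N ≤ Nat.card ↥L := Subgroup.card_le_of_le hNL
    have heq := hNmax hLS hcard_le
    exact hne (Subgroup.eq_of_le_of_card_ge hNL heq)
  refine ⟨N, hNnorm, hNcard,
    quot_isDigraph hdig hconn hAut hvt hbip hGp hNnorm hs hat σ hσ hNcard,
    fun W W' => quot_vertex_trans hconn hAut hvt hbip hGp hNnorm W W',
    fun p q hp hq => quot_arc_trans hconn hAut hvt hbip hGp hNnorm hat σ hσ p q hp hq, ?_⟩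
  by_cases htr : ∀ L : Subgroup (Equiv.Perm V), NormalIn L Gp → N ≤ L → N ≠ L →
      ∀ x ∈ Δ, ∀ y ∈ Δ, ∃ l ∈ L, l x = y
  · exact Or.inl htr
  · right
    have hcov : ∀ L : Subgroup (Equiv.Perm V), NormalIn L Gp → N ≤ L → N ≠ L →
        ∃ a ∈ Δ, ∃ b ∈ Δ, ∀ x ∈ Δ, (∃ l ∈ L, l a = x) ∨ (∃ l ∈ L, l b = x) :=
      fun L hL hNL hne => cover_of_card_lt L hΔne (hmaxcons L hL hNL hne)
    refine ⟨hcov, ?_⟩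
    push_neg at htr
    obtain ⟨L0, hL0, hNL0, hne0, x0, hx0, y0, hy0, hxy0⟩ := htr
    obtain ⟨aa, haa, bb, hbb, hcover2⟩ := hcov L0 hL0 hNL0 hne0
    have symmL : ∀ u v : V, (∃ l ∈ L0, l u = v) → (∃ l ∈ L0, l v = u) := by
      rintro u v ⟨l, hl, rfl⟩
      exact ⟨l⁻¹, L0.inv_mem hl, l.symm_apply_apply u⟩
    have transL : ∀ u v w : V, (∃ l ∈ L0, l u = v) → (∃ l ∈ L0, l v = w) →
        ∃ l ∈ L0, l u = w := by
      rintro u v w ⟨l, hl, rfl⟩ ⟨l', hl', rfl⟩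
      exact ⟨l' * l, L0.mul_mem hl' hl, Equiv.Perm.mul_apply l' l u⟩
    have hnotxy : ¬ ∃ l ∈ L0, l x0 = y0 := by
      rintro ⟨l, hl, hlx⟩
      exact hxy0 l hl hlx
    have hx0' := hcover2 x0 hx0
    have hy0' := hcover2 y0 hy0
    refine ⟨L0, hL0, hNL0, x0, hx0, y0, hy0, ?_, hnotxy⟩
    intro x hx
    rcases hx0' with hxa | hxb <;> rcases hy0' with hya | hyb
    · exact absurd (transL _ _ _ (symmL _ _ hxa) hya) hnotxy
    · rcases hcover2 x hx with h | h
      · exact Or.inl (transL _ _ _ (symmL _ _ hxa) h)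
      · exact Or.inr (transL _ _ _ (symmL _ _ hyb) h)
    · rcases hcover2 x hx with h | h
      · exact Or.inr (transL _ _ _ (symmL _ _ hya) h)
      · exact Or.inl (transL _ _ _ (symmL _ _ hxb) h)
    · exact absurd (transL _ _ _ (symmL _ _ hxb) hyb) hnotxy

end ArcTransDigraph
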